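/- The shift graph G(n, 2) — with vertex set the pairs (i, j), 1 ≤ i < j ≤ n, where (i, j) and (j, k) are adjacent for all i < j < k — has chromatic number ⌈log₂ n⌉. -/

import Mathlib

open SimpleGraph

private lemma testBit_log_self {x : ℕ} (hx : x ≠ 0) :
    x.testBit (Nat.log 2 x) = true := by
  have h1 : 2 ^ Nat.log 2 x ≤ x := Nat.pow_log_le_self 2 hx
  have h2 : x < 2 ^ (Nat.log 2 x + 1) := Nat.lt_pow_succ_log_self one_lt_two x
  rw [Nat.testBit_eq_decide_div_mod_eq]
  have hd : x / 2 ^ Nat.log 2 x = 1 := by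
    apply Nat.div_eq_of_lt_le (by simpa using h1)
    rw [pow_succ] at h2; omega
  simp [hd]

private lemma xor_ne_zero_of_lt {i j : ℕ} (hij : i < j) : i ^^^ j ≠ 0 := by
  intro h
  have : i = j := by
    have := congrArg (fun t => t ^^^ j) h
    simpa [Nat.xor_assoc] using this
  omega

/-- At the highest differing bit, the smaller number has a `0` and the larger a `1`. -/
private lemma testBit_highest_diff {i j : ℕ} (hij : i < j) :
    i.testBit (Nat.log 2 (i ^^^ j)) = false ∧
      j.testBit (Nat.log 2 (i ^^^ j)) = true := by
  set b := Nat.log 2 (i ^^^ j) with hb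
  have hx : i ^^^ j ≠ 0 := xor_ne_zero_of_lt hij
  have hbit : (i ^^^ j).testBit b = true := testBit_log_self hx
  have hdiff : i.testBit b ≠ j.testBit b := by
    rw [Nat.testBit_xor] at hbit
    intro h; rw [h] at hbit; simp at hbit
  have hhigh : ∀ k, b < k → i.testBit k = j.testBit k := by
    intro k hk
    have hlt : i ^^^ j < 2 ^ k := by
      calc i ^^^ j < 2 ^ (b + 1) := Nat.lt_pow_succ_log_self one_lt_two _
        _ ≤ 2 ^ k := Nat.pow_le_pow_right (by norm_num) hk
    have := Nat.testBit_lt_two_pow hlt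
    rw [Nat.testBit_xor] at this
    revert this
    cases i.testBit k <;> cases j.testBit k <;> simp
  cases hi : i.testBit b with
  | false =>
    refine ⟨rfl, ?_⟩
    cases hj : j.testBit b with
    | false => rw [hi, hj] at hdiff; exact absurd rfl hdiff
    | true => rfl
  | true =>
    exfalso
    have hj : j.testBit b = false := by
      cases hj : j.testBit b with
      | false => rfl
      | true => rw [hi, hj] at hdiff; exact absurd rfl hdiff
    have : j < i := Nat.lt_of_testBit b hj hi (fun k hk => (hhigh k hk).symm)
    omega

/-- Erdős–Hajnal: the shift graph `G(n, 2)` — vertices are the pairs `(i, j)` with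
`i < j` from an `n`-element set, `(i, j)` and `(j, k)` adjacent for all `i < j < k` —
has chromatic number `⌈log₂ n⌉`. -/
theorem shift_graph_two_chromaticNumber (n : ℕ)
    (G : SimpleGraph {p : Fin n × Fin n // p.1 < p.2})
    (hG : ∀ a b : {p : Fin n × Fin n // p.1 < p.2},
      G.Adj a b ↔ (a.val.2 = b.val.1 ∨ b.val.2 = a.val.1)) :
    G.chromaticNumber = (Nat.clog 2 n : ℕ∞) := by
  classical
  rcases Nat.lt_or_ge n 2 with hn | hn
  · -- degenerate case: no vertices
    have hE : IsEmpty {p : Fin n × Fin n // p.1 < p.2} := by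
      constructor
      rintro ⟨⟨a, b⟩, h⟩
      have ha := a.isLt
      have hb := b.isLt
      have : (a : ℕ) < (b : ℕ) := h
      omega
    rw [G.chromaticNumber_eq_zero_of_isEmpty,
      Nat.clog_of_right_le_one (by omega), Nat.cast_zero]
  · set c := Nat.clog 2 n with hc
    have hn2c : n ≤ 2 ^ c := Nat.le_pow_clog one_lt_two n
    -- The coloring: color (i, j) by the highest bit where i and j differ.
    have hbitlt : ∀ v : {p : Fin n × Fin n // p.1 < p.2},
        Nat.log 2 ((v.val.1 : ℕ) ^^^ (v.val.2 : ℕ)) < c := by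
      rintro ⟨⟨i, j⟩, hij⟩
      have hij' : (i : ℕ) < (j : ℕ) := hij
      by_contra hle
      push_neg at hle
      have htrue := (testBit_highest_diff hij').2
      have hjlt : (j : ℕ) < 2 ^ Nat.log 2 ((i : ℕ) ^^^ (j : ℕ)) :=
        lt_of_lt_of_le j.isLt (hn2c.trans (Nat.pow_le_pow_right (by norm_num) hle))
      rw [Nat.testBit_lt_two_pow hjlt] at htrue
      exact Bool.false_ne_true htrue
    let C : G.Coloring (Fin c) :=
      Coloring.mk
        (fun v => ⟨Nat.log 2 ((v.val.1 : ℕ) ^^^ (v.val.2 : ℕ)), hbitlt v⟩)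
        (by
          intro a b hab heq
          rw [hG] at hab
          have heq' : Nat.log 2 ((a.val.1 : ℕ) ^^^ (a.val.2 : ℕ))
              = Nat.log 2 ((b.val.1 : ℕ) ^^^ (b.val.2 : ℕ)) := by
            exact congrArg Fin.val heq
          have ha : (a.val.1 : ℕ) < (a.val.2 : ℕ) := a.prop
          have hb : (b.val.1 : ℕ) < (b.val.2 : ℕ) := b.prop
          rcases hab with h | h
          · -- a = (i,j), b = (j,k)
            have h1 := (testBit_highest_diff ha).2
            have h2 := (testBit_highest_diff hb).1
            rw [heq', h] at h1
            rw [h1] at h2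
            simp at h2
          · have h1 := (testBit_highest_diff hb).2
            have h2 := (testBit_highest_diff ha).1
            rw [← heq', h] at h1
            rw [h1] at h2
            simp at h2)
    have hupper : G.chromaticNumber ≤ (c : ℕ∞) := by
      have : G.Colorable c := ⟨C⟩
      exact this.chromaticNumber_le
    have hlower : (c : ℕ∞) ≤ G.chromaticNumber := by
      rw [chromaticNumber_eq_biInf]
      refine le_iInf₂ fun m hm => ?_
      rw [Nat.cast_le]
      obtain ⟨D⟩ := hm
      -- injection from Fin n into Finset (Fin m)
      let f : Fin n → Finset (Fin m) := fun i =>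
        Finset.univ.filter (fun col =>
          ∃ v : {p : Fin n × Fin n // p.1 < p.2}, v.val.1 = i ∧ D v = col)
      have hkey : ∀ i j : Fin n, i < j → f i ≠ f j := by
        intro i j hij hfeq
        let v : {p : Fin n × Fin n // p.1 < p.2} := ⟨(i, j), hij⟩
        have hvi : D v ∈ f i := by
          simp only [f, Finset.mem_filter, Finset.mem_univ, true_and]
          exact ⟨v, rfl, rfl⟩
        rw [hfeq] at hvi
        simp only [f, Finset.mem_filter, Finset.mem_univ, true_and] at hvi
        obtain ⟨w, hw1, hw2⟩ := hvi
        have hadj : G.Adj v w := by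
          rw [hG]
          left
          exact hw1.symm
        exact D.valid hadj hw2.symm
      have hinj : Function.Injective f := by
        intro i j hfeq
        by_contra hne
        rcases lt_or_gt_of_ne hne with h | h
        · exact hkey i j h hfeq
        · exact hkey j i h hfeq.symm
      have hcard : n ≤ 2 ^ m := by
        have := Fintype.card_le_of_injective f hinj
        simpa [Fintype.card_finset] using this
      exact (Nat.clog_le_iff_le_pow one_lt_two).mpr hcard
    exact le_antisymm hupper hlower
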